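/- Let A_ρ ⊆ M_n(ℂ) be a structural matrix algebra that has a central class consisting of a single element. Then there exists an injective map φ : A_ρ → A_ρ satisfying both φ(XY) = φ(X)φ(Y) and φ(XY + YX) = φ(X)φ(Y) + φ(Y)φ(X) for all X, Y ∈ A_ρ, which is not additive. -/

import Mathlib

noncomputable section NonAddAux

private lemma nonadd_core (s t : ℚ) (h : (s : ℝ) * Real.log 2 + (t : ℝ) * Real.log 3 = 0) :
    s = 0 ∧ t = 0 := by
  have h2 : (0:ℝ) < Real.log 2 := Real.log_pos (by norm_num)
  have h3 : (0:ℝ) < Real.log 3 := Real.log_pos (by norm_num)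
  by_cases hs : s = 0
  · subst hs
    simp only [Rat.cast_zero, zero_mul, zero_add] at h
    refine ⟨rfl, ?_⟩
    rcases mul_eq_zero.1 h with h' | h'
    · exact_mod_cast h'
    · exact absurd h' (ne_of_gt h3)
  · exfalso
    have hs' : (s : ℝ) ≠ 0 := by exact_mod_cast hs
    set q : ℚ := -t / s with hq
    have hql : (q : ℝ) * (s : ℝ) = -(t : ℝ) := by
      rw [hq]; push_cast; field_simp
    have h1 : (s : ℝ) * Real.log 2 = ((s : ℝ)) * ((q : ℝ) * Real.log 3) := by
      have : -(t:ℝ) * Real.log 3 = (s:ℝ) * Real.log 2 := by linarith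
      rw [← hql] at this; linarith [this]
    have hlog : Real.log 2 = (q : ℝ) * Real.log 3 := mul_left_cancel₀ hs' h1
    have hqpos : (0:ℝ) < (q : ℝ) := by nlinarith
    have hq0 : 0 < q := by exact_mod_cast hqpos
    have hnum : 0 < q.num := Rat.num_pos.2 hq0
    set p : ℕ := q.num.toNat with hp
    have hppos : 0 < p := by omega
    have hcast : (q : ℝ) = (p : ℝ) / (q.den : ℝ) := by
      rw [Rat.cast_def,
        show ((q.num : ℝ)) = (p : ℝ) by exact_mod_cast (Int.toNat_of_nonneg hnum.le).symm]
    have hden : (q.den : ℝ) ≠ 0 := by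
      exact_mod_cast q.den_nz
    have hkey : (q.den : ℝ) * Real.log 2 = (p : ℝ) * Real.log 3 := by
      rw [hlog, hcast]; field_simp
    have hpow : Real.log ((2:ℝ) ^ q.den) = Real.log ((3:ℝ) ^ p) := by
      rw [Real.log_pow, Real.log_pow]; exact_mod_cast hkey
    have hpow' : (2:ℝ) ^ q.den = (3:ℝ) ^ p := by
      have m1 : (2:ℝ) ^ q.den ∈ Set.Ioi (0:ℝ) := pow_pos (by norm_num : (0:ℝ) < 2) _
      have m2 : (3:ℝ) ^ p ∈ Set.Ioi (0:ℝ) := pow_pos (by norm_num : (0:ℝ) < 3) _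
      exact Real.log_injOn_pos m1 m2 hpow
    have hnat : (2:ℕ) ^ q.den = 3 ^ p := by exact_mod_cast hpow'
    have hdvd : (2:ℕ) ∣ 3 ^ p := hnat ▸ dvd_pow_self 2 q.den_nz
    have := Nat.Prime.dvd_of_dvd_pow Nat.prime_two hdvd
    norm_num at this

private lemma nonadd_indepPair : LinearIndependent ℚ ![Real.log 2, Real.log 3] := by
  rw [LinearIndependent.pair_iff]
  intro s t hst
  apply nonadd_core s t
  simpa [Rat.smul_def] using hst

private lemma nonadd_indepSet :
    LinearIndependent ℚ ((↑) : ({Real.log 2, Real.log 3} : Set ℝ) → ℝ) := by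
  have h : LinearIndependent ℚ ((↑) : Set.range ![Real.log 2, Real.log 3] → ℝ) :=
    (linearIndepOn_id_range_iff nonadd_indepPair.injective).mpr nonadd_indepPair
  have hr : Set.range ![Real.log 2, Real.log 3] = {Real.log 2, Real.log 3} := by
    ext x
    simp only [Set.mem_range, Fin.exists_fin_two, Matrix.cons_val_zero, Matrix.cons_val_one,
      Matrix.head_cons, Set.mem_insert_iff, Set.mem_singleton_iff]
    tauto
  rwa [hr] at h

private lemma nonadd_indepOn : LinearIndepOn ℚ id ({Real.log 2, Real.log 3} : Set ℝ) :=
  nonadd_indepSet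

private def nonadd_bas :
    Module.Basis (nonadd_indepOn.extend (Set.subset_univ _)) ℚ ℝ :=
  Module.Basis.extend nonadd_indepOn

private lemma log2_ne_log3 : Real.log 2 ≠ Real.log 3 :=
  ne_of_lt (Real.log_lt_log (by norm_num) (by norm_num))

private def nonadd_j2 : nonadd_indepOn.extend (Set.subset_univ _) :=
  ⟨Real.log 2, nonadd_indepOn.subset_extend _ (by left; rfl)⟩

private def nonadd_j3 : nonadd_indepOn.extend (Set.subset_univ _) :=
  ⟨Real.log 3, nonadd_indepOn.subset_extend _ (by right; rfl)⟩

private lemma nonadd_j2_ne_j3 : nonadd_j2 ≠ nonadd_j3 := by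
  intro h
  exact log2_ne_log3 (congrArg Subtype.val h)

private def Lmap : ℝ →ₗ[ℚ] ℝ :=
  LinearMap.id + (LinearMap.toSpanSingleton ℚ ℝ (Real.log 3)).comp (nonadd_bas.coord nonadd_j3)

private lemma Lmap_apply (x : ℝ) :
    Lmap x = x + (nonadd_bas.coord nonadd_j3 x) • Real.log 3 := by
  simp [Lmap, LinearMap.toSpanSingleton_apply]

private lemma coord_log3 : nonadd_bas.coord nonadd_j3 (Real.log 3) = 1 := by
  have h : nonadd_bas nonadd_j3 = Real.log 3 :=
    Module.Basis.extend_apply_self nonadd_indepOn nonadd_j3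
  have h2 := congrArg (nonadd_bas.coord nonadd_j3) h
  rw [Module.Basis.coord_apply, Module.Basis.coord_apply, Module.Basis.repr_self, Finsupp.single_eq_same] at h2
  rw [Module.Basis.coord_apply]
  exact h2.symm

private lemma coord_log2 : nonadd_bas.coord nonadd_j3 (Real.log 2) = 0 := by
  have h : nonadd_bas nonadd_j2 = Real.log 2 :=
    Module.Basis.extend_apply_self nonadd_indepOn nonadd_j2
  have h2 := congrArg (nonadd_bas.coord nonadd_j3) h
  rw [Module.Basis.coord_apply, Module.Basis.coord_apply, Module.Basis.repr_self,
    Finsupp.single_eq_of_ne nonadd_j2_ne_j3.symm] at h2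
  rw [Module.Basis.coord_apply]
  exact h2.symm

private lemma Lmap_log2 : Lmap (Real.log 2) = Real.log 2 := by
  rw [Lmap_apply, coord_log2, zero_smul, add_zero]

private lemma Lmap_log3 : Lmap (Real.log 3) = 2 * Real.log 3 := by
  rw [Lmap_apply, coord_log3, one_smul, two_mul]

private lemma Lmap_inj : Function.Injective Lmap := by
  rw [injective_iff_map_eq_zero]
  intro u hu
  rw [Lmap_apply] at hu
  set c : ℚ := nonadd_bas.coord nonadd_j3 u with hc
  have h1 : c + c = 0 := by
    have h2 := congrArg (nonadd_bas.coord nonadd_j3) hu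
    rw [map_add, map_smul, map_zero, coord_log3, ← hc, smul_eq_mul, mul_one] at h2
    exact h2
  have hc0 : c = 0 := by linarith
  rw [hc0, zero_smul, add_zero] at hu
  exact hu

private def fmap (z : ℂ) : ℂ :=
  if z = 0 then 0
  else ((Real.exp (Lmap (Real.log (‖z‖))) / ‖z‖ : ℝ) : ℂ) * z

private lemma fmap_zero : fmap 0 = 0 := by simp [fmap]

private lemma fmap_mul (z w : ℂ) : fmap (z * w) = fmap z * fmap w := by
  rcases eq_or_ne z 0 with rfl | hz
  · simp [fmap]
  rcases eq_or_ne w 0 with rfl | hw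
  · simp [fmap]
  have hz' : ‖z‖ ≠ 0 := by simpa using hz
  have hw' : ‖w‖ ≠ 0 := by simpa using hw
  rw [fmap, fmap, fmap, if_neg (mul_ne_zero hz hw), if_neg hz, if_neg hw]
  rw [norm_mul, Real.log_mul hz' hw', map_add, Real.exp_add]
  push_cast
  have hz'' : (‖z‖ : ℂ) ≠ 0 := Complex.ofReal_ne_zero.mpr hz'
  have hw'' : (‖w‖ : ℂ) ≠ 0 := Complex.ofReal_ne_zero.mpr hw'
  field_simp

private lemma fmap_two_mul (t : ℂ) : fmap (2 * t) = 2 * fmap t := by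
  rcases eq_or_ne t 0 with rfl | ht
  · simp [fmap]
  have ht' : ‖t‖ ≠ 0 := by simpa using ht
  rw [fmap, fmap, if_neg (mul_ne_zero two_ne_zero ht), if_neg ht]
  rw [norm_mul, Complex.norm_ofNat, Real.log_mul two_ne_zero ht', map_add, Lmap_log2,
    Real.exp_add, Real.exp_log (by norm_num : (0:ℝ) < 2)]
  push_cast
  have ht'' : (‖t‖ : ℂ) ≠ 0 := Complex.ofReal_ne_zero.mpr ht'
  field_simp

private lemma fmap_ne_zero {z : ℂ} (hz : z ≠ 0) : fmap z ≠ 0 := by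
  rw [fmap, if_neg hz]
  refine mul_ne_zero ?_ hz
  rw [Complex.ofReal_ne_zero]
  have : ‖z‖ ≠ 0 := by simpa using hz
  positivity

private lemma fmap_abs {z : ℂ} (hz : z ≠ 0) :
    ‖(fmap z)‖ = Real.exp (Lmap (Real.log (‖z‖))) := by
  have hz' : ‖z‖ ≠ 0 := by simpa using hz
  rw [fmap, if_neg hz, norm_mul, Complex.norm_real, Real.norm_eq_abs, abs_of_pos (by positivity)]
  field_simp

private lemma fmap_injective : Function.Injective fmap := by
  intro z w h
  rcases eq_or_ne z 0 with rfl | hz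
  · by_contra hw
    exact fmap_ne_zero (Ne.symm hw) (by rw [← h, fmap_zero])
  rcases eq_or_ne w 0 with rfl | hw
  · exact absurd (by rw [h, fmap_zero]) (fmap_ne_zero hz)
  have habs : ‖z‖ = ‖w‖ := by
    have h1 := fmap_abs hz
    have h2 := fmap_abs hw
    rw [h] at h1
    have h3 : Lmap (Real.log (‖z‖)) = Lmap (Real.log (‖w‖)) :=
      Real.exp_injective (by rw [← h1, ← h2])
    have h4 : Real.log (‖z‖) = Real.log (‖w‖) := Lmap_inj h3
    have hz' : (0:ℝ) < ‖z‖ := norm_pos_iff.mpr hz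
    have hw' : (0:ℝ) < ‖w‖ := norm_pos_iff.mpr hw
    calc ‖z‖ = Real.exp (Real.log (‖z‖)) := (Real.exp_log hz').symm
      _ = Real.exp (Real.log (‖w‖)) := by rw [h4]
      _ = ‖w‖ := Real.exp_log hw'
  rw [fmap, fmap, if_neg hz, if_neg hw, habs] at h
  have hc : ((Real.exp (Lmap (Real.log (‖w‖))) / ‖w‖ : ℝ) : ℂ) ≠ 0 := by
    rw [Complex.ofReal_ne_zero]
    have : ‖w‖ ≠ 0 := by simpa using hw
    positivity
  exact mul_left_cancel₀ hc h

private lemma fmap_one : fmap 1 = 1 := by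
  rw [fmap, if_neg one_ne_zero]
  simp [Real.exp_zero]

private lemma fmap_two : fmap 2 = 2 := by
  have := fmap_two_mul 1
  rwa [mul_one, fmap_one, mul_one] at this

private lemma fmap_three : fmap 3 = 9 := by
  rw [fmap, if_neg (by norm_num : (3:ℂ) ≠ 0)]
  have habs : ‖(3:ℂ)‖ = 3 := by
    simp [Complex.norm_natCast]
  rw [habs, Lmap_log3, two_mul, Real.exp_add, Real.exp_log (by norm_num : (0:ℝ) < 3)]
  norm_num

end NonAddAux

/-- The structural matrix algebra determined by a quasi-order `ρ` on `Fin n`. -/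
def structuralMatrixAlgebra {n : ℕ} (ρ : Fin n → Fin n → Prop) :
    Set (Matrix (Fin n) (Fin n) ℂ) :=
  {X | ∀ i j, ¬ ρ i j → X i j = 0}

/-- The equivalence relation `≈` whose classes are the central classes of `A_ρ`:
the reflexive-transitive closure of `i ≈₀ j ⟺ (i,j) ∈ ρ ∨ (j,i) ∈ ρ`. -/
def centralRel {n : ℕ} (ρ : Fin n → Fin n → Prop) : Fin n → Fin n → Prop :=
  Relation.ReflTransGen (fun a b => ρ a b ∨ ρ b a)

/-- If the structural matrix algebra `A_ρ` has a central class
consisting of a single element, then there exists an injective map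
`φ : A_ρ → A_ρ` which is both multiplicative and Jordan multiplicative but not
additive. -/
theorem exists_nonadditive_multiplicative_map {n : ℕ} (ρ : Fin n → Fin n → Prop)
    (hrefl : ∀ i, ρ i i) (htrans : ∀ i j k, ρ i j → ρ j k → ρ i k)
    (hclass : ∃ i : Fin n, ∀ j, centralRel ρ i j → j = i) :
    ∃ φ : Matrix (Fin n) (Fin n) ℂ → Matrix (Fin n) (Fin n) ℂ,
      (∀ X ∈ structuralMatrixAlgebra ρ, φ X ∈ structuralMatrixAlgebra ρ) ∧
      Set.InjOn φ (structuralMatrixAlgebra ρ) ∧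
      (∀ X ∈ structuralMatrixAlgebra ρ, ∀ Y ∈ structuralMatrixAlgebra ρ,
        φ (X * Y) = φ X * φ Y) ∧
      (∀ X ∈ structuralMatrixAlgebra ρ, ∀ Y ∈ structuralMatrixAlgebra ρ,
        φ (X * Y + Y * X) = φ X * φ Y + φ Y * φ X) ∧
      ∃ X ∈ structuralMatrixAlgebra ρ, ∃ Y ∈ structuralMatrixAlgebra ρ,
        φ (X + Y) ≠ φ X + φ Y := by
  classical
  obtain ⟨i, hi⟩ := hclass
  have hzero : ∀ X ∈ structuralMatrixAlgebra ρ, ∀ j : Fin n, j ≠ i →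
      X i j = 0 ∧ X j i = 0 := by
    intro X hX j hj
    constructor
    · exact hX i j fun h => hj (hi j (Relation.ReflTransGen.single (Or.inl h)))
    · exact hX j i fun h => hj (hi j (Relation.ReflTransGen.single (Or.inr h)))
  set A := structuralMatrixAlgebra ρ with hA
  -- entrywise description of products of images
  have hentry : ∀ X ∈ A, ∀ Y ∈ A, ∀ j k : Fin n,
      ((Matrix.of fun j k => if j = i ∧ k = i then fmap (X i i) else X j k) *
        (Matrix.of fun j k => if j = i ∧ k = i then fmap (Y i i) else Y j k)) j k =
      if j = i ∧ k = i then fmap (X i i) * fmap (Y i i)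
      else (X * Y) j k := by
    intro X hX Y hY j k
    rw [Matrix.mul_apply]
    by_cases hj : j = i <;> by_cases hk : k = i
    · rw [if_pos ⟨hj, hk⟩]
      rw [Finset.sum_eq_single i]
      · simp [hj, hk]
      · intro m _ hm
        simp [hj, hk, hm, (hzero X hX m hm).1]
      · intro h
        exact absurd (Finset.mem_univ i) h
    · rw [if_neg (by tauto), Matrix.mul_apply]
      refine Finset.sum_congr rfl fun m _ => ?_
      by_cases hm : m = i
      · simp [hj, hk, hm, (hzero Y hY k hk).1]
      · simp [hm, hk]
    · rw [if_neg (by tauto), Matrix.mul_apply]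
      refine Finset.sum_congr rfl fun m _ => ?_
      by_cases hm : m = i
      · simp [hj, hk, hm, (hzero X hX j hj).2]
      · simp [hm, hj]
    · rw [if_neg (by tauto), Matrix.mul_apply]
      refine Finset.sum_congr rfl fun m _ => ?_
      simp [hj, hk]
  have hdiag : ∀ X ∈ A, ∀ Y ∈ A, (X * Y) i i = X i i * Y i i := by
    intro X hX Y hY
    rw [Matrix.mul_apply]
    rw [Finset.sum_eq_single i]
    · intro m _ hm
      rw [(hzero X hX m hm).1, zero_mul]
    · intro h
      exact absurd (Finset.mem_univ i) h
  refine ⟨fun X => Matrix.of fun j k =>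
    if j = i ∧ k = i then fmap (X i i) else X j k, ?_, ?_, ?_, ?_, ?_⟩
  · -- maps the algebra into itself
    intro X hX j k hjk
    simp only [Matrix.of_apply]
    by_cases h : j = i ∧ k = i
    · exact absurd (h.1 ▸ h.2 ▸ hrefl i) hjk
    · rw [if_neg h]
      exact hX j k hjk
  · -- injectivity
    intro X hX Y hY h
    ext j k
    have h' := congrFun (congrFun h j) k
    simp only [Matrix.of_apply] at h'
    by_cases hc : j = i ∧ k = i
    · rw [if_pos hc, if_pos hc] at h'
      have := fmap_injective h'
      rw [hc.1, hc.2, this]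
    · rwa [if_neg hc, if_neg hc] at h'
  · -- multiplicativity
    intro X hX Y hY
    ext j k
    simp only [Matrix.of_apply]
    rw [hentry X hX Y hY j k]
    by_cases hc : j = i ∧ k = i
    · rw [if_pos hc, if_pos hc, hdiag X hX Y hY, fmap_mul]
    · rw [if_neg hc, if_neg hc]
  · -- Jordan multiplicativity
    intro X hX Y hY
    ext j k
    simp only [Matrix.of_apply, Matrix.add_apply]
    rw [hentry X hX Y hY j k, hentry Y hY X hX j k]
    by_cases hc : j = i ∧ k = i
    · rw [if_pos hc, if_pos hc, if_pos hc, hdiag X hX Y hY,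
        hdiag Y hY X hX,
        show X i i * Y i i + Y i i * X i i = 2 * (X i i * Y i i) from by ring,
        fmap_two_mul, fmap_mul]
      ring
    · rw [if_neg hc, if_neg hc, if_neg hc]
  · -- non-additivity
    refine ⟨Matrix.of fun j k => if j = i ∧ k = i then (1:ℂ) else 0, ?_,
      Matrix.of fun j k => if j = i ∧ k = i then (2:ℂ) else 0, ?_, ?_⟩
    · intro j k hjk
      simp only [Matrix.of_apply]
      by_cases h : j = i ∧ k = i
      · exact absurd (h.1 ▸ h.2 ▸ hrefl i) hjk
      · rw [if_neg h]
    · intro j k hjk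
      simp only [Matrix.of_apply]
      by_cases h : j = i ∧ k = i
      · exact absurd (h.1 ▸ h.2 ▸ hrefl i) hjk
      · rw [if_neg h]
    · intro h
      have h' := congrFun (congrFun h i) i
      simp at h'
      rw [show (1:ℂ) + 2 = 3 from by norm_num] at h'
      rw [fmap_three, fmap_one, fmap_two] at h'
      norm_num at h'
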